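/- Suppose Y and C are independent, and that the indicator δ = 1{Y ≤ C} is conditionally independent of the covariate vector X given the σ-algebra generated by Y. Then for every x ∈ ℝ^k and every y ∈ ℝ with ℙ(Q ≥ y) > 0, the joint cumulative hazard is identified from observables: ∫_{(-∞,y]} (ℙ(Q ≥ s))⁻¹ dν_{1,x}(s) = ∫_{(-∞,y]} (ℙ(Y ≥ s))⁻¹ dμ_{Y,x}(s), where ν_{1,x} is the sub-distribution measure A ↦ ℙ(Q ∈ A, X ≤ x, Y ≤ C) and μ_{Y,x} is the sub-distribution measure A ↦ ℙ(Y ∈ A, X ≤ x) (with X ≤ x meant componentwise). (This is the identity Λ(y,x) = Λ^cens(y,x) of Proposition 1 within one treatment arm.) -/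

import Mathlib

open MeasureTheory ProbabilityTheory Set
open scoped ENNReal

section Aux

variable {Ω : Type*} [MeasurableSpace Ω]

lemma aux_measurable_surv (P : Measure Ω) (Z : Ω → ℝ) :
    Measurable fun s => P {ω | s ≤ Z ω} := by
  have h : Antitone fun s => P {ω | s ≤ Z ω} := fun a b hab =>
    measure_mono fun ω hω => le_trans hab hω
  exact h.measurable

lemma aux_integrable_of_bounded (P : Measure Ω) [IsFiniteMeasure P] {f : Ω → ℝ}
    (hf : Measurable f) (M : ℝ) (h : ∀ ω, |f ω| ≤ M) : Integrable f P :=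
  ⟨hf.aestronglyMeasurable, HasFiniteIntegral.of_bounded (C := M) (ae_of_all _ h)⟩

lemma aux_measure_inter_le (P : Measure Ω) [IsProbabilityMeasure P]
    (Y C : Ω → ℝ) (hY : Measurable Y) (hC : Measurable C)
    (hindep : IndepFun Y C P) {B' : Set ℝ} (hB' : MeasurableSet B') :
    P (Y ⁻¹' B' ∩ {ω | Y ω ≤ C ω}) = ∫⁻ s in B', P {ω | s ≤ C ω} ∂(Measure.map Y P) := by
  have hpair : Measurable fun ω => (Y ω, C ω) := hY.prodMk hC
  have hmap := (indepFun_iff_map_prod_eq_prod_map_map hY.aemeasurable hC.aemeasurable).mp hindep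
  have hE : MeasurableSet {p : ℝ × ℝ | p.1 ∈ B' ∧ p.1 ≤ p.2} :=
    (measurable_fst hB').inter (measurableSet_le measurable_fst measurable_snd)
  have h1 : Y ⁻¹' B' ∩ {ω | Y ω ≤ C ω}
      = (fun ω => (Y ω, C ω)) ⁻¹' {p : ℝ × ℝ | p.1 ∈ B' ∧ p.1 ≤ p.2} := rfl
  rw [h1, ← Measure.map_apply hpair hE, hmap, Measure.prod_apply hE,
    ← lintegral_indicator hB' _]
  congr 1
  funext a
  by_cases ha : a ∈ B'
  · have hslice : (Prod.mk a ⁻¹' {p : ℝ × ℝ | p.1 ∈ B' ∧ p.1 ≤ p.2}) = Ici a := by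
      ext c; simp [ha]
    rw [hslice, Set.indicator_of_mem ha, Measure.map_apply hC measurableSet_Ici]
    rfl
  · have hslice : (Prod.mk a ⁻¹' {p : ℝ × ℝ | p.1 ∈ B' ∧ p.1 ≤ p.2}) = ∅ := by
      ext c; simp [ha]
    rw [hslice, Set.indicator_of_notMem ha]
    simp

/-- Conditional expectation of the non-censoring indicator given `σ(Y)`. -/
lemma aux_condexp_censor (P : Measure Ω) [IsProbabilityMeasure P]
    (Y C : Ω → ℝ) (hY : Measurable Y) (hC : Measurable C)
    (hindep : IndepFun Y C P) :
    (fun ω => (P {ω' | Y ω ≤ C ω'}).toReal)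
      =ᵐ[P] P[({ω | Y ω ≤ C ω}).indicator (fun _ => (1:ℝ))
              | MeasurableSpace.comap Y inferInstance] := by
  have hmY : MeasurableSpace.comap Y (inferInstance : MeasurableSpace ℝ)
      ≤ ‹MeasurableSpace Ω› := measurable_iff_comap_le.mp hY
  have hD : MeasurableSet {ω | Y ω ≤ C ω} := measurableSet_le hY hC
  have hG : Measurable fun s => (P {ω | s ≤ C ω}).toReal :=
    (aux_measurable_surv P C).ennreal_toReal
  have hGb : ∀ s, |(P {ω | s ≤ C ω}).toReal| ≤ 1 := by
    intro s
    rw [abs_of_nonneg ENNReal.toReal_nonneg]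
    calc (P {ω | s ≤ C ω}).toReal ≤ (1 : ℝ≥0∞).toReal :=
          ENNReal.toReal_mono (by simp) prob_le_one
      _ = 1 := by simp
  have hGY : Measurable fun ω => (P {ω' | Y ω ≤ C ω'}).toReal := hG.comp hY
  have hYmY : @Measurable Ω ℝ (MeasurableSpace.comap Y inferInstance) _ Y :=
    fun t ht => ⟨t, ht, rfl⟩
  refine ae_eq_condExp_of_forall_setIntegral_eq hmY
    ((integrable_const (1:ℝ)).indicator hD) (fun s _ _ => ?_) (fun s hs _ => ?_) ?_
  · exact (aux_integrable_of_bounded P hGY 1 fun ω => hGb _).integrableOn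
  · obtain ⟨B', hB', rfl⟩ := hs
    have hB'm : MeasurableSet B' := hB'
    rw [setIntegral_indicator hD, setIntegral_const, smul_eq_mul, mul_one]
    have h2 : ∫ ω in Y ⁻¹' B', (P {ω' | Y ω ≤ C ω'}).toReal ∂P
        = ∫ s in B', (P {ω | s ≤ C ω}).toReal ∂(Measure.map Y P) :=
      (setIntegral_map hB'm (hG.aestronglyMeasurable) hY.aemeasurable).symm
    rw [h2, integral_toReal ((aux_measurable_surv P C).aemeasurable.restrict)
        (ae_of_all _ fun s => measure_lt_top P _),
      ← aux_measure_inter_le P Y C hY hC hindep hB'm]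
    exact (measureReal_def _ _).symm
  · exact StronglyMeasurable.aestronglyMeasurable
      (Measurable.stronglyMeasurable (hG.comp hYmY))

lemma aux_side (P : Measure Ω) [IsProbabilityMeasure P] (Y : Ω → ℝ) (hY : Measurable Y)
    {A : Set Ω} (hA : MeasurableSet A) (g₀ : ℝ → ℝ≥0∞) (f : ℝ → ℝ) (hf : Measurable f)
    (hnn : ∀ s, 0 ≤ f s) (M : ℝ) (hb : ∀ s, |f s| ≤ M) (y : ℝ)
    (hzero : ∀ s, ¬ s ≤ y → f s = 0)
    (heq : ∀ s ∈ Iic y, g₀ s = ENNReal.ofReal (f s)) :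
    ∫⁻ s in Iic y, g₀ s ∂(Measure.map Y (P.restrict A))
      = ENNReal.ofReal (∫ ω, f (Y ω) * A.indicator (fun _ => (1:ℝ)) ω ∂P) := by
  have hint : Integrable (fun ω => f (Y ω) * A.indicator (fun _ => (1:ℝ)) ω) P := by
    refine aux_integrable_of_bounded P ((hf.comp hY).mul (measurable_const.indicator hA)) M ?_
    intro ω
    rw [abs_mul]
    have h1 : |A.indicator (fun _ => (1:ℝ)) ω| ≤ 1 := by
      by_cases h : ω ∈ A <;> simp [h]
    calc |f (Y ω)| * |A.indicator (fun _ => (1:ℝ)) ω| ≤ M * 1 :=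
        mul_le_mul (hb _) h1 (abs_nonneg _) (le_trans (abs_nonneg _) (hb 0))
      _ = M := mul_one M
  rw [setLIntegral_congr_fun_ae measurableSet_Iic (ae_of_all _ heq),
    setLIntegral_map measurableSet_Iic hf.ennreal_ofReal hY]
  have e2 : ∀ ω, (Y ⁻¹' Iic y).indicator (fun ω => ENNReal.ofReal (f (Y ω))) ω
      = ENNReal.ofReal (f (Y ω)) := by
    intro ω
    by_cases h : ω ∈ Y ⁻¹' Iic y
    · rw [Set.indicator_of_mem h]
    · rw [Set.indicator_of_notMem h, hzero (Y ω) h]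
      simp
  rw [← lintegral_indicator (hY measurableSet_Iic), lintegral_congr e2,
    ← lintegral_indicator hA]
  have e3 : ∀ ω, A.indicator (fun ω => ENNReal.ofReal (f (Y ω))) ω
      = ENNReal.ofReal (f (Y ω) * A.indicator (fun _ => (1:ℝ)) ω) := by
    intro ω; by_cases h : ω ∈ A <;> simp [h]
  rw [lintegral_congr e3,
    ← ofReal_integral_eq_lintegral_ofReal hint
      (ae_of_all _ fun ω => mul_nonneg (hnn _)
        (Set.indicator_nonneg (fun _ _ => zero_le_one) ω))]

end Aux

theorem joint_cumulative_hazard_identified_from_censored_data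
    {Ω : Type*} [MeasurableSpace Ω] [StandardBorelSpace Ω] [Nonempty Ω]
    (P : Measure Ω) [IsProbabilityMeasure P] {k : ℕ}
    (Y C : Ω → ℝ) (X : Ω → Fin k → ℝ)
    (hY : Measurable Y) (hC : Measurable C) (hX : Measurable X)
    (hindep : IndepFun Y C P)
    (hci : CondIndepFun (MeasurableSpace.comap Y inferInstance)
        (measurable_iff_comap_le.mp hY)
        (fun ω => if Y ω ≤ C ω then (1 : ℝ) else 0) X P)
    (x : Fin k → ℝ) (y : ℝ) (hy : 0 < P {ω | y ≤ min (Y ω) (C ω)}) :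
    ∫⁻ s in Iic y, (P {ω | s ≤ min (Y ω) (C ω)})⁻¹
        ∂(Measure.map (fun ω => min (Y ω) (C ω))
            (P.restrict {ω | (∀ i, X ω i ≤ x i) ∧ Y ω ≤ C ω}))
      = ∫⁻ s in Iic y, (P {ω | s ≤ Y ω})⁻¹
          ∂(Measure.map Y (P.restrict {ω | ∀ i, X ω i ≤ x i})) := by
  classical
  have hmY : MeasurableSpace.comap Y (inferInstance : MeasurableSpace ℝ)
      ≤ ‹MeasurableSpace Ω› := measurable_iff_comap_le.mp hY
  have hYmY : @Measurable Ω ℝ (MeasurableSpace.comap Y inferInstance) _ Y :=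
    fun t ht => ⟨t, ht, rfl⟩
  have hQm : Measurable fun ω => min (Y ω) (C ω) := hY.min hC
  have hD : MeasurableSet {ω | Y ω ≤ C ω} := measurableSet_le hY hC
  have ht : MeasurableSet {v : Fin k → ℝ | ∀ i, v i ≤ x i} := by
    rw [Set.setOf_forall]
    exact MeasurableSet.iInter fun i =>
      measurableSet_le (measurable_pi_apply i) measurable_const
  have hB : MeasurableSet {ω : Ω | ∀ i, X ω i ≤ x i} := hX ht
  have hS : MeasurableSet {ω : Ω | (∀ i, X ω i ≤ x i) ∧ Y ω ≤ C ω} :=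
    hB.inter hD
  -- positivity on (-∞, y]
  have hposQ : ∀ s, s ≤ y → 0 < P {ω | s ≤ min (Y ω) (C ω)} := fun s hs =>
    lt_of_lt_of_le hy (measure_mono fun ω hω => le_trans hs hω)
  have hposY : ∀ s, s ≤ y → 0 < P {ω | s ≤ Y ω} := fun s hs =>
    lt_of_lt_of_le hy
      (measure_mono fun ω hω => le_trans hs (le_trans hω (min_le_left _ _)))
  have hposC : ∀ s, s ≤ y → 0 < P {ω | s ≤ C ω} := fun s hs =>
    lt_of_lt_of_le hy
      (measure_mono fun ω hω => le_trans hs (le_trans hω (min_le_right _ _)))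
  -- product formula
  have hprod : ∀ s, P {ω | s ≤ min (Y ω) (C ω)}
      = P {ω | s ≤ Y ω} * P {ω | s ≤ C ω} := by
    intro s
    have h1 : {ω | s ≤ min (Y ω) (C ω)} = Y ⁻¹' Ici s ∩ C ⁻¹' Ici s := by
      ext ω
      simp [Set.mem_setOf_eq, le_min_iff, Set.mem_Ici]
    have h2 := hindep.measure_inter_preimage_eq_mul (Ici s) (Ici s)
      measurableSet_Ici measurableSet_Ici
    rw [h1, h2]
    rfl
  -- the real-valued integrand functions
  set M : ℝ := ((P {ω | y ≤ min (Y ω) (C ω)})⁻¹).toReal with hMdef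
  have hMnn : 0 ≤ M := ENNReal.toReal_nonneg
  set G : ℝ → ℝ := fun s => (P {ω | s ≤ C ω}).toReal with hGdef
  set φ : ℝ → ℝ := fun s =>
    if s ≤ y then ((P {ω | s ≤ min (Y ω) (C ω)})⁻¹).toReal else 0 with hφdef
  set ψ : ℝ → ℝ := fun s =>
    if s ≤ y then ((P {ω | s ≤ Y ω})⁻¹).toReal else 0 with hψdef
  have hGm : Measurable G := (aux_measurable_surv P C).ennreal_toReal
  have hφm : Measurable φ :=
    Measurable.ite measurableSet_Iic
      (((aux_measurable_surv P (fun ω => min (Y ω) (C ω))).inv).ennreal_toReal)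
      measurable_const
  have hψm : Measurable ψ :=
    Measurable.ite measurableSet_Iic
      (((aux_measurable_surv P Y).inv).ennreal_toReal) measurable_const
  have hφnn : ∀ s, 0 ≤ φ s := by
    intro s; rw [hφdef]; dsimp only
    split_ifs
    · exact ENNReal.toReal_nonneg
    · exact le_refl 0
  have hψnn : ∀ s, 0 ≤ ψ s := by
    intro s; rw [hψdef]; dsimp only
    split_ifs
    · exact ENNReal.toReal_nonneg
    · exact le_refl 0
  have hGb : ∀ s, |G s| ≤ 1 := by
    intro s
    rw [hGdef, abs_of_nonneg ENNReal.toReal_nonneg]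
    calc (P {ω | s ≤ C ω}).toReal ≤ (1 : ℝ≥0∞).toReal :=
          ENNReal.toReal_mono (by simp) prob_le_one
      _ = 1 := by simp
  have hφb : ∀ s, |φ s| ≤ M := by
    intro s
    rw [hφdef]; dsimp only
    split_ifs with hs
    · rw [abs_of_nonneg ENNReal.toReal_nonneg]
      refine ENNReal.toReal_mono (ENNReal.inv_ne_top.mpr hy.ne') ?_
      exact ENNReal.inv_le_inv' (measure_mono fun ω hω => le_trans hs hω)
    · simpa using hMnn
  have hψb : ∀ s, |ψ s| ≤ M := by
    intro s
    rw [hψdef]; dsimp only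
    split_ifs with hs
    · rw [abs_of_nonneg ENNReal.toReal_nonneg]
      refine ENNReal.toReal_mono (ENNReal.inv_ne_top.mpr hy.ne') ?_
      exact ENNReal.inv_le_inv'
        (measure_mono fun ω hω => le_trans hs (le_trans hω (min_le_left _ _)))
    · simpa using hMnn
  have hφG : ∀ s, φ s * G s = ψ s := by
    intro s
    rw [hφdef, hψdef, hGdef]; dsimp only
    split_ifs with hs
    · have ha : P {ω | s ≤ Y ω} ≠ 0 := (hposY s hs).ne'
      have hb : P {ω | s ≤ C ω} ≠ 0 := (hposC s hs).ne'
      have hb' : P {ω | s ≤ C ω} ≠ ∞ := measure_ne_top P _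
      have hbR : (P {ω | s ≤ C ω}).toReal ≠ 0 :=
        ENNReal.toReal_ne_zero.mpr ⟨hb, hb'⟩
      rw [hprod s, ENNReal.toReal_inv, ENNReal.toReal_inv, ENNReal.toReal_mul,
        mul_inv, mul_assoc, inv_mul_cancel₀ hbR, mul_one]
    · exact zero_mul _
  -- reduce the LHS to a real integral
  have hmapQ : Measure.map (fun ω => min (Y ω) (C ω))
        (P.restrict {ω | (∀ i, X ω i ≤ x i) ∧ Y ω ≤ C ω})
      = Measure.map Y (P.restrict {ω | (∀ i, X ω i ≤ x i) ∧ Y ω ≤ C ω}) := by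
    apply Measure.map_congr
    exact (ae_restrict_iff' hS).mpr (ae_of_all _ fun ω hω => min_eq_left hω.2)
  have hLHS := aux_side P Y hY hS (fun s => (P {ω | s ≤ min (Y ω) (C ω)})⁻¹) φ hφm
      hφnn M hφb y (fun s hs => by rw [hφdef]; exact if_neg hs)
      (fun s hs => by
        rw [hφdef]; dsimp only
        rw [if_pos (mem_Iic.mp hs), ENNReal.ofReal_toReal (ENNReal.inv_ne_top.mpr (hposQ s hs).ne')])
  have hRHS := aux_side P Y hY hB (fun s => (P {ω | s ≤ Y ω})⁻¹) ψ hψm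
      hψnn M hψb y (fun s hs => by rw [hψdef]; exact if_neg hs)
      (fun s hs => by
        rw [hψdef]; dsimp only
        rw [if_pos (mem_Iic.mp hs), ENNReal.ofReal_toReal (ENNReal.inv_ne_top.mpr (hposY s hs).ne')])
  rw [hmapQ, hLHS, hRHS]
  congr 1
  -- rewrite the restricting set as an intersection
  rw [show {ω | (∀ i, X ω i ≤ x i) ∧ Y ω ≤ C ω}
      = ({ω | Y ω ≤ C ω} ∩ {ω | ∀ i, X ω i ≤ x i}) from Set.ext fun ω => and_comm]
  have hDB : MeasurableSet ({ω | Y ω ≤ C ω} ∩ {ω | ∀ i, X ω i ≤ x i}) := hD.inter hB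
  -- conditional independence applied to the relevant sets
  have hδm : Measurable (fun ω => if Y ω ≤ C ω then (1:ℝ) else 0) :=
    Measurable.ite hD measurable_const measurable_const
  have hA := (condIndepFun_iff_condExp_inter_preimage_eq_mul hδm hX).mp hci
      {1} {v | ∀ i, v i ≤ x i} (measurableSet_singleton 1) ht
  have hpre1 : (fun ω => if Y ω ≤ C ω then (1:ℝ) else 0) ⁻¹' {1} = {ω | Y ω ≤ C ω} := by
    ext ω
    by_cases h : Y ω ≤ C ω <;> simp [h]
  have hpre2 : X ⁻¹' {v | ∀ i, v i ≤ x i} = {ω : Ω | ∀ i, X ω i ≤ x i} := rfl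
  rw [hpre1, hpre2] at hA
  -- conditional expectation of the censoring indicator
  have hGcond : (fun ω => G (Y ω)) =ᵐ[P]
      P[({ω | Y ω ≤ C ω}).indicator (fun _ => (1:ℝ))
        | MeasurableSpace.comap Y inferInstance] :=
    aux_condexp_censor P Y C hY hC hindep
  -- strong measurability and integrability
  have hu_sm : StronglyMeasurable[MeasurableSpace.comap Y (inferInstance : MeasurableSpace ℝ)]
      (fun ω => φ (Y ω)) := Measurable.stronglyMeasurable (hφm.comp hYmY)
  have huG_sm : StronglyMeasurable[MeasurableSpace.comap Y (inferInstance : MeasurableSpace ℝ)]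
      (fun ω => φ (Y ω) * G (Y ω)) :=
    Measurable.stronglyMeasurable ((hφm.mul hGm).comp hYmY)
  have hbound1 : ∀ (A : Set Ω), MeasurableSet A → ∀ (f : ℝ → ℝ), Measurable f →
      (∀ s, |f s| ≤ M) →
      Integrable ((fun ω => f (Y ω)) * A.indicator (fun _ => (1:ℝ))) P := by
    intro A hA' f hfm hfb
    refine aux_integrable_of_bounded P ((hfm.comp hY).mul (measurable_const.indicator hA')) M ?_
    intro ω
    rw [Pi.mul_apply, abs_mul]
    have h1 : |A.indicator (fun _ => (1:ℝ)) ω| ≤ 1 := by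
      by_cases h : ω ∈ A <;> simp [h]
    calc |f (Y ω)| * |A.indicator (fun _ => (1:ℝ)) ω| ≤ M * 1 :=
        mul_le_mul (hfb _) h1 (abs_nonneg _) hMnn
      _ = M := mul_one M
  have h1B : Integrable ({ω : Ω | ∀ i, X ω i ≤ x i}.indicator fun _ => (1:ℝ)) P :=
    (integrable_const 1).indicator hB
  have h1DB : Integrable (({ω | Y ω ≤ C ω} ∩ {ω | ∀ i, X ω i ≤ x i}).indicator
      fun _ => (1:ℝ)) P := (integrable_const 1).indicator hDB
  have hintS := hbound1 _ hDB φ hφm hφb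
  have hintB := hbound1 _ hB (fun s => φ s * G s) (hφm.mul hGm) (fun s => by
    rw [abs_mul]
    calc |φ s| * |G s| ≤ M * 1 := mul_le_mul (hφb s) (hGb s) (abs_nonneg _) hMnn
      _ = M := mul_one M)
  haveI : SigmaFinite (P.trim hmY) := inferInstance
  calc ∫ ω, φ (Y ω) * ({ω | Y ω ≤ C ω} ∩ {ω | ∀ i, X ω i ≤ x i}).indicator
        (fun _ => (1:ℝ)) ω ∂P
      = ∫ ω, (P[(fun ω => φ (Y ω)) * ({ω | Y ω ≤ C ω} ∩ {ω | ∀ i, X ω i ≤ x i}).indicator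
          (fun _ => (1:ℝ)) | MeasurableSpace.comap Y inferInstance]) ω ∂P :=
        (integral_condExp hmY).symm
    _ = ∫ ω, ((fun ω => φ (Y ω)) * (P[({ω | Y ω ≤ C ω} ∩ {ω | ∀ i, X ω i ≤ x i}).indicator
          (fun _ => (1:ℝ)) | MeasurableSpace.comap Y inferInstance])) ω ∂P :=
        integral_congr_ae (condExp_mul_of_stronglyMeasurable_left hu_sm hintS h1DB)
    _ = ∫ ω, ((fun ω => φ (Y ω) * G (Y ω)) * (P[({ω : Ω | ∀ i, X ω i ≤ x i}).indicator
          (fun _ => (1:ℝ)) | MeasurableSpace.comap Y inferInstance])) ω ∂P := by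
        refine integral_congr_ae ?_
        filter_upwards [hA, hGcond] with ω h1 h2
        simp only [Pi.mul_apply]
        rw [h1, ← h2]
        ring
    _ = ∫ ω, (P[(fun ω => φ (Y ω) * G (Y ω)) * ({ω : Ω | ∀ i, X ω i ≤ x i}).indicator
          (fun _ => (1:ℝ)) | MeasurableSpace.comap Y inferInstance]) ω ∂P :=
        (integral_congr_ae (condExp_mul_of_stronglyMeasurable_left huG_sm hintB h1B)).symm
    _ = ∫ ω, ((fun ω => φ (Y ω) * G (Y ω)) * ({ω : Ω | ∀ i, X ω i ≤ x i}).indicator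
          (fun _ => (1:ℝ))) ω ∂P := integral_condExp hmY
    _ = ∫ ω, ψ (Y ω) * ({ω : Ω | ∀ i, X ω i ≤ x i}).indicator (fun _ => (1:ℝ)) ω ∂P := by
        refine integral_congr_ae (ae_of_all _ fun ω => ?_)
        simp only [Pi.mul_apply]
        rw [hφG (Y ω)]
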